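/- arXiv:2603.23056 — 2 statements merged into one kernel-verified Lean document; each statement's English description precedes it below -/
import Mathlib

section
/- For Hermitian d×d matrices A and B, the vectors of increasingly ordered eigenvalues satisfy ‖λ↑(A) − λ↑(B)‖₂ ≤ ‖A − B‖₂, where ‖·‖₂ is the Frobenius norm. -/
open Matrix Finset

attribute [local instance] Matrix.frobeniusNormedAddCommGroup

/-- The increasingly ordered eigenvalues of a Hermitian matrix. -/
noncomputable def sortedEigs {d : ℕ} {A : Matrix (Fin d) (Fin d) ℂ} (hA : A.IsHermitian) :
    Fin d → ℝ :=
  hA.eigenvalues ∘ Tuple.sort hA.eigenvalues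

section aux

variable {d : ℕ} {A B : Matrix (Fin d) (Fin d) ℂ}

private lemma loewner_rearrange_perm (f g : Fin d → ℝ) (σ : Equiv.Perm (Fin d)) :
    ∑ i, f i * g (σ i) ≤ ∑ i, (f ∘ Tuple.sort f) i * (g ∘ Tuple.sort g) i := by
  set p := Tuple.sort f
  set q := Tuple.sort g
  have h1 : ∑ i, f i * g (σ i) = ∑ i, (f ∘ p) i * (g ∘ q) ((p.trans (σ.trans q.symm)) i) := by
    rw [← Equiv.sum_comp p (fun i => f i * g (σ i))]
    simp [Function.comp]
  rw [h1]
  exact ((Tuple.monotone_sort f).monovary (Tuple.monotone_sort g)).sum_mul_comp_perm_le_sum_mul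

private lemma loewner_ds_bound (S : Matrix (Fin d) (Fin d) ℝ)
    (hS : S ∈ doublyStochastic ℝ (Fin d)) (f g : Fin d → ℝ) :
    ∑ i, ∑ j, S i j * (f i * g j) ≤ ∑ i, (f ∘ Tuple.sort f) i * (g ∘ Tuple.sort g) i := by
  obtain ⟨w, hw0, hw1, hSw⟩ := exists_eq_sum_perm_of_mem_doublyStochastic hS
  have key : ∑ i, ∑ j, S i j * (f i * g j)
      = ∑ σ : Equiv.Perm (Fin d), w σ * ∑ i, f i * g (σ i) := by
    subst hSw
    simp only [Finset.sum_apply, Matrix.sum_apply, Matrix.smul_apply, smul_eq_mul]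
    have : ∀ i, ∑ j, (∑ σ : Equiv.Perm (Fin d), w σ * (σ.permMatrix ℝ) i j) * (f i * g j)
        = ∑ σ : Equiv.Perm (Fin d), w σ * (f i * g (σ i)) := by
      intro i
      simp_rw [Finset.sum_mul]
      rw [Finset.sum_comm]
      refine Finset.sum_congr rfl fun σ _ => ?_
      rw [Finset.sum_eq_single (σ i)]
      · simp [Equiv.Perm.permMatrix, PEquiv.toMatrix_apply, Equiv.toPEquiv]
      · intro j _ hj
        simp [Equiv.Perm.permMatrix, PEquiv.toMatrix_apply, Equiv.toPEquiv, Ne.symm hj]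
      · simp
    simp_rw [this]
    rw [Finset.sum_comm]
    refine Finset.sum_congr rfl fun σ _ => ?_
    rw [Finset.mul_sum]
  rw [key]
  calc ∑ σ : Equiv.Perm (Fin d), w σ * ∑ i, f i * g (σ i)
      ≤ ∑ σ : Equiv.Perm (Fin d), w σ * ∑ i, (f ∘ Tuple.sort f) i * (g ∘ Tuple.sort g) i := by
        exact Finset.sum_le_sum fun σ _ =>
          mul_le_mul_of_nonneg_left (loewner_rearrange_perm f g σ) (hw0 σ)
    _ = _ := by rw [← Finset.sum_mul, hw1, one_mul]

private lemma loewner_trace_mul_eq (hA : A.IsHermitian) (hB : B.IsHermitian) :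
    ∃ W : Matrix (Fin d) (Fin d) ℂ, W ∈ Matrix.unitaryGroup (Fin d) ℂ ∧
      (A * B).trace = ∑ i, ∑ j, (hA.eigenvalues i * hB.eigenvalues j : ℂ) *
        Complex.normSq (W i j) := by
  set U := (hA.eigenvectorUnitary : Matrix (Fin d) (Fin d) ℂ) with hU
  set V := (hB.eigenvectorUnitary : Matrix (Fin d) (Fin d) ℂ) with hV
  set D : Matrix (Fin d) (Fin d) ℂ := diagonal (RCLike.ofReal ∘ hA.eigenvalues) with hD
  set E : Matrix (Fin d) (Fin d) ℂ := diagonal (RCLike.ofReal ∘ hB.eigenvalues) with hE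
  set W := star U * V with hW
  refine ⟨W, mul_mem (Unitary.star_mem hA.eigenvectorUnitary.2) hB.eigenvectorUnitary.2, ?_⟩
  have hAe : A = U * D * star U := hA.spectral_theorem
  have hBe : B = V * E * star V := hB.spectral_theorem
  have hsW : star W = star V * U := by rw [hW, StarMul.star_mul, star_star]
  have key : (A * B).trace = (D * W * E * star W).trace := by
    rw [hAe, hBe]
    rw [show U * D * star U * (V * E * star V) = U * (D * W * E * star V) by
      simp only [hW, Matrix.mul_assoc]]
    rw [Matrix.trace_mul_comm, hsW]
    simp only [Matrix.mul_assoc]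
  rw [key]
  rw [Matrix.trace]
  refine Finset.sum_congr rfl fun i _ => ?_
  show (D * W * E * star W) i i = ∑ j, (hA.eigenvalues i * hB.eigenvalues j : ℂ) * Complex.normSq (W i j)
  rw [Matrix.mul_apply]
  refine Finset.sum_congr rfl fun j _ => ?_
  rw [hD, hE]
  simp only [Matrix.mul_diagonal, Matrix.diagonal_mul, Matrix.star_apply, Function.comp]
  rw [show (RCLike.ofReal (hA.eigenvalues i) : ℂ) * W i j * RCLike.ofReal (hB.eigenvalues j) * star (W i j)
      = (RCLike.ofReal (hA.eigenvalues i) : ℂ) * RCLike.ofReal (hB.eigenvalues j) * (W i j * star (W i j)) by ring]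
  rw [show star (W i j) = starRingEnd ℂ (W i j) from rfl, Complex.mul_conj]
  rw [show ((RCLike.ofReal : ℝ → ℂ)) = Complex.ofReal from rfl]

private lemma loewner_unitary_normSq_ds (W : Matrix (Fin d) (Fin d) ℂ)
    (hW : W ∈ Matrix.unitaryGroup (Fin d) ℂ) :
    (Matrix.of fun i j => Complex.normSq (W i j)) ∈ doublyStochastic ℝ (Fin d) := by
  rw [mem_doublyStochastic_iff_sum]
  refine ⟨fun i j => Complex.normSq_nonneg _, fun i => ?_, fun j => ?_⟩
  · have h := Matrix.mem_unitaryGroup_iff.mp hW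
    have h1 : (W * star W) i i = 1 := by rw [h]; simp
    rw [Matrix.mul_apply] at h1
    simp only [Matrix.star_apply] at h1
    have h2 : (∑ j, (Complex.normSq (W i j) : ℂ)) = 1 := by
      rw [← h1]
      refine Finset.sum_congr rfl fun j _ => ?_
      rw [show star (W i j) = starRingEnd ℂ (W i j) from rfl, Complex.mul_conj]
    have := congrArg Complex.re h2
    push_cast at this
    simpa using this
  · have h := Matrix.mem_unitaryGroup_iff'.mp hW
    have h1 : (star W * W) j j = 1 := by rw [h]; simp
    rw [Matrix.mul_apply] at h1
    simp only [Matrix.star_apply] at h1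
    have h2 : (∑ i, (Complex.normSq (W i j) : ℂ)) = 1 := by
      rw [← h1]
      refine Finset.sum_congr rfl fun i _ => ?_
      rw [show star (W i j) = starRingEnd ℂ (W i j) from rfl, mul_comm, Complex.mul_conj]
    have := congrArg Complex.re h2
    push_cast at this
    simpa using this

private lemma loewner_trace_sq (hA : A.IsHermitian) :
    (A * A).trace = ((∑ i, hA.eigenvalues i ^ 2 : ℝ) : ℂ) := by
  set U := (hA.eigenvectorUnitary : Matrix (Fin d) (Fin d) ℂ)
  set D : Matrix (Fin d) (Fin d) ℂ := diagonal (RCLike.ofReal ∘ hA.eigenvalues) with hD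
  have hAe : A = U * D * star U := hA.spectral_theorem
  have hUU : star U * U = 1 := (Matrix.mem_unitaryGroup_iff').mp hA.eigenvectorUnitary.2
  have key : (A * A).trace = (D * D).trace := by
    rw [hAe]
    rw [show U * D * star U * (U * D * star U) = U * (D * (star U * U) * D * star U) by
      simp only [Matrix.mul_assoc]]
    rw [hUU, Matrix.mul_one, Matrix.trace_mul_comm]
    rw [show D * D * star U * U = D * D * (star U * U) by simp only [Matrix.mul_assoc]]
    rw [hUU, Matrix.mul_one]
  rw [key, hD, Matrix.diagonal_mul_diagonal, Matrix.trace_diagonal]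
  push_cast
  refine Finset.sum_congr rfl fun i _ => ?_
  simp [Function.comp, sq]

end aux

/-- Löwner's theorem: `‖λ↑(A) − λ↑(B)‖₂ ≤ ‖A − B‖₂` (Frobenius norm). -/
theorem loewner_eigenvalue_lipschitz {d : ℕ} {A B : Matrix (Fin d) (Fin d) ℂ}
    (hA : A.IsHermitian) (hB : B.IsHermitian) :
    Real.sqrt (∑ i, (sortedEigs hA i - sortedEigs hB i) ^ 2) ≤ ‖A - B‖ := by
  set M := A - B with hM
  have hMH : M.IsHermitian := hA.sub hB
  -- Frobenius norm squared
  have hnorm : ‖M‖ = Real.sqrt (∑ i, ∑ j, Complex.normSq (M i j)) := by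
    rw [Matrix.frobenius_norm_def, Real.sqrt_eq_rpow]
    congr 1
    refine Finset.sum_congr rfl fun i _ => Finset.sum_congr rfl fun j _ => ?_
    rw [Real.rpow_two, Complex.sq_norm]
  -- trace expansion
  obtain ⟨W, hWu, hWt⟩ := loewner_trace_mul_eq hA hB
  set t : ℝ := ∑ i, ∑ j, hA.eigenvalues i * hB.eigenvalues j * Complex.normSq (W i j) with ht
  have hWt' : (A * B).trace = (t : ℂ) := by
    rw [hWt, ht]
    push_cast
    ring_nf
  -- ∑∑ normSq (M i j) via traces
  have htrM : (M * M).trace = ((∑ i, ∑ j, Complex.normSq (M i j) : ℝ) : ℂ) := by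
    rw [Matrix.trace]
    push_cast
    refine Finset.sum_congr rfl fun i _ => ?_
    show (M * M) i i = ∑ j, (Complex.normSq (M i j) : ℂ)
    rw [Matrix.mul_apply]
    refine Finset.sum_congr rfl fun j _ => ?_
    have : M j i = starRingEnd ℂ (M i j) := by
      have := hMH.apply j i
      rw [← this]
      simp
    rw [this, Complex.mul_conj]
  have hexp : (M * M).trace = (A * A).trace + (B * B).trace - 2 * (A * B).trace := by
    have h1 : M * M = A * A - A * B - B * A + B * B := by
      rw [hM]; noncomm_ring
    rw [h1, Matrix.trace_add, Matrix.trace_sub, Matrix.trace_sub,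
      Matrix.trace_mul_comm B A]
    ring
  -- real identity
  have hreal : ∑ i, ∑ j, Complex.normSq (M i j)
      = (∑ i, hA.eigenvalues i ^ 2) + (∑ i, hB.eigenvalues i ^ 2) - 2 * t := by
    have := htrM.symm.trans (hexp.trans (by
      rw [loewner_trace_sq hA, loewner_trace_sq hB, hWt']))
    have h2 : ((∑ i, ∑ j, Complex.normSq (M i j) : ℝ) : ℂ)
        = (((∑ i, hA.eigenvalues i ^ 2) + (∑ i, hB.eigenvalues i ^ 2) - 2 * t : ℝ) : ℂ) := by
      rw [this]; push_cast; ring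
    exact_mod_cast h2
  -- the key inequality: t ≤ ∑ sortedEigs hA * sortedEigs hB
  have hkey : t ≤ ∑ i, sortedEigs hA i * sortedEigs hB i := by
    have hds := loewner_unitary_normSq_ds W hWu
    have := loewner_ds_bound _ hds hA.eigenvalues hB.eigenvalues
    rw [ht]
    refine le_trans (le_of_eq ?_) this
    refine Finset.sum_congr rfl fun i _ => Finset.sum_congr rfl fun j _ => ?_
    simp [Matrix.of_apply]; ring
  -- sums of squares of sorted = unsorted
  have hsumA : ∑ i, sortedEigs hA i ^ 2 = ∑ i, hA.eigenvalues i ^ 2 :=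
    Equiv.sum_comp (Tuple.sort hA.eigenvalues) (fun i => hA.eigenvalues i ^ 2)
  have hsumB : ∑ i, sortedEigs hB i ^ 2 = ∑ i, hB.eigenvalues i ^ 2 :=
    Equiv.sum_comp (Tuple.sort hB.eigenvalues) (fun i => hB.eigenvalues i ^ 2)
  -- final inequality of squares
  have hfin : ∑ i, (sortedEigs hA i - sortedEigs hB i) ^ 2 ≤ ∑ i, ∑ j, Complex.normSq (M i j) := by
    have expand : ∑ i, (sortedEigs hA i - sortedEigs hB i) ^ 2
        = (∑ i, sortedEigs hA i ^ 2) + (∑ i, sortedEigs hB i ^ 2)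
          - 2 * ∑ i, sortedEigs hA i * sortedEigs hB i := by
      rw [← Finset.sum_add_distrib, Finset.mul_sum, ← Finset.sum_sub_distrib]
      refine Finset.sum_congr rfl fun i _ => by ring
    rw [expand, hreal, hsumA, hsumB]
    linarith [hkey]
  rw [hnorm]
  exact Real.sqrt_le_sqrt hfin
end

section
/- For normal d×d complex matrices A and B, there exists a permutation σ of {1,…,d} such that (Σ_{i=1}^d |λ_i(A) − λ_{σ(i)}(B)|²)^{1/2} ≤ ‖A − B‖₂, where λ_i(A) and λ_i(B) are any enumerations of the eigenvalues of A and B with multiplicity. -/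
open Matrix Finset Polynomial


open Finset

lemma exists_bijOn_of_map_eq {ι α : Type*} [DecidableEq ι] [DecidableEq α] :
    ∀ (s t : Finset ι) (f g : ι → α), s.val.map f = t.val.map g →
    ∃ σ : ι → ι, Set.BijOn σ s t ∧ ∀ i ∈ s, f i = g (σ i) := by
  intro s
  induction s using Finset.induction with
  | empty =>
      intro t f g h
      have ht : t = ∅ := by
        have := congrArg Multiset.card h
        simpa using (Finset.card_eq_zero.mp (by simpa using this.symm))
      subst ht
      exact ⟨id, by simp [Set.BijOn], by simp⟩
  | @insert a s ha ih =>
      intro t f g h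
      have hval : (insert a s).val = a ::ₘ s.val := Finset.insert_val_of_notMem ha
      rw [hval, Multiset.map_cons] at h
      have hfa : f a ∈ t.val.map g := by rw [← h]; exact Multiset.mem_cons_self _ _
      obtain ⟨b, hb, hgb⟩ := Multiset.mem_map.mp hfa
      have hbt : b ∈ t := hb
      have htval : t.val = b ::ₘ (t.erase b).val := by
        rw [Finset.erase_val]; exact (Multiset.cons_erase hb).symm
      rw [htval, Multiset.map_cons, hgb] at h
      have h' : s.val.map f = (t.erase b).val.map g := (Multiset.cons_inj_right _).mp h
      obtain ⟨σ', ⟨hmap, hinj, hsurj⟩, hfg⟩ := ih (t.erase b) f g h'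
      refine ⟨Function.update σ' a b, ⟨?_, ?_, ?_⟩, ?_⟩
      · intro x hx
        simp only [Finset.coe_insert, Set.mem_insert_iff] at hx
        rcases hx with rfl | hx
        · simpa using hbt
        · have hxa : x ≠ a := fun hxa => ha (hxa ▸ hx)
          rw [Function.update_of_ne hxa]
          exact Finset.mem_coe.mpr (Finset.mem_of_mem_erase (hmap hx))
      · intro x hx y hy hxy
        simp only [Finset.coe_insert, Set.mem_insert_iff] at hx hy
        rcases hx with rfl | hx <;> rcases hy with rfl | hy
        · rfl
        · exfalso
          have hya : y ≠ x := fun hya => ha (hya ▸ hy)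
          rw [Function.update_self, Function.update_of_ne hya] at hxy
          exact (Finset.notMem_erase b t) (hxy ▸ hmap hy)
        · exfalso
          have hxa : x ≠ y := fun hxa => ha (hxa ▸ hx)
          rw [Function.update_self, Function.update_of_ne hxa] at hxy
          exact (Finset.notMem_erase b t) (hxy ▸ hmap hx)
        · have hxa : x ≠ a := fun hxa => ha (hxa ▸ hx)
          have hya : y ≠ a := fun hya => ha (hya ▸ hy)
          rw [Function.update_of_ne hxa, Function.update_of_ne hya] at hxy
          exact hinj hx hy hxy
      · intro y hy
        rcases eq_or_ne y b with rfl | hyb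
        · exact ⟨a, by simp, Function.update_self _ _ _⟩
        · have hy' : y ∈ (t.erase b : Finset ι) := Finset.mem_erase.mpr ⟨hyb, hy⟩
          obtain ⟨x, hx, hxy⟩ := hsurj hy'
          have hxa : x ≠ a := fun hxa => ha (hxa ▸ hx)
          exact ⟨x, by simp [Finset.mem_coe.mp hx], by rwa [Function.update_of_ne hxa]⟩
      · intro i hi
        rcases Finset.mem_insert.mp hi with rfl | hi
        · rw [Function.update_self]; exact hgb.symm
        · have hia : i ≠ a := fun hia => ha (hia ▸ hi)
          rw [Function.update_of_ne hia]; exact hfg i hi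

lemma exists_perm_of_map_univ_eq {ι α : Type*} [Fintype ι] [DecidableEq ι] [DecidableEq α]
    (f g : ι → α) (h : Finset.univ.val.map f = Finset.univ.val.map g) :
    ∃ σ : Equiv.Perm ι, ∀ i, f i = g (σ i) := by
  obtain ⟨σ, hbij, hfg⟩ := exists_bijOn_of_map_eq Finset.univ Finset.univ f g h
  have : Function.Bijective σ := by
    have := hbij
    rw [Finset.coe_univ] at this
    exact Set.bijOn_univ.mp this
  exact ⟨Equiv.ofBijective σ this, fun i => hfg i (Finset.mem_univ i)⟩


open Matrix Polynomial

variable {n : Type*} [Fintype n] [DecidableEq n]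

lemma charmatrix_diagonal (a : n → ℂ) :
    charmatrix (diagonal a) = diagonal (fun i => (X : ℂ[X]) - C (a i)) := by
  ext i j
  by_cases h : i = j <;>
    simp [charmatrix, diagonal, h, Matrix.one_apply]

lemma charpoly_diagonal (a : n → ℂ) :
    (diagonal a).charpoly = ∏ i, ((X : ℂ[X]) - C (a i)) := by
  rw [Matrix.charpoly, _root_.charmatrix_diagonal, det_diagonal]

lemma roots_charpoly_diagonal (a : n → ℂ) :
    (diagonal a).charpoly.roots = Finset.univ.val.map a := by
  rw [_root_.charpoly_diagonal]
  have : (∏ i, ((X : ℂ[X]) - C (a i))) = (Finset.univ.val.map a |>.map fun x => X - C x).prod := by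
    rw [Multiset.map_map]; rfl
  rw [this, Polynomial.roots_multiset_prod_X_sub_C]

lemma charpoly_unitary_conj {U D : Matrix n n ℂ} (hU : U ∈ Matrix.unitaryGroup n ℂ) :
    (U * D * star U).charpoly = D.charpoly := by
  have h1 : star U * U = 1 := hU.1
  have h2 : U * star U = 1 := hU.2
  unfold Matrix.charpoly
  have key : charmatrix (U * D * star U) =
      (U.map C) * charmatrix D * ((star U).map C) := by
    have hC : ∀ (M N : Matrix n n ℂ), (M * N).map (C : ℂ →+* ℂ[X]) = M.map C * N.map C :=
      fun M N => Matrix.map_mul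
    rw [charmatrix]
    rw [charmatrix]
    rw [Matrix.mul_sub, Matrix.sub_mul]
    congr 1
    · -- scalar X = U.map C * (scalar X) * (star U).map C
      rw [← scalar_commute X (fun r => (Commute.all _ _)) (U.map C), mul_assoc, ← hC, h2]
      simp
    · show C.mapMatrix (U * D * star U) = U.map C * C.mapMatrix D * (star U).map C
      simp only [RingHom.mapMatrix_apply]
      rw [← hC, ← hC]
  rw [key, det_mul, det_mul]
  have : det (U.map (C : ℂ →+* ℂ[X])) * det ((star U).map C) = 1 := by
    rw [← det_mul, ← Matrix.map_mul, h2]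
    simp
  calc det (U.map C) * det (charmatrix D) * det ((star U).map C)
      = det (U.map C) * det ((star U).map C) * det (charmatrix D) := by ring
    _ = det (charmatrix D) := by rw [this, one_mul]


open Matrix

variable {n : Type*} [Fintype n] [DecidableEq n]

noncomputable def sqn (M : Matrix n n ℂ) : ℝ := (Matrix.trace (Mᴴ * M)).re

lemma sqn_eq_sum (M : Matrix n n ℂ) : sqn M = ∑ i, ∑ j, ‖M i j‖ ^ 2 := by
  unfold sqn
  rw [Matrix.trace]
  simp only [Matrix.diag, Matrix.mul_apply, Matrix.conjTranspose_apply]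
  rw [Complex.re_sum]
  rw [Finset.sum_comm]
  congr 1
  ext i
  rw [Complex.re_sum]
  congr 1
  ext j
  rw [Complex.star_def, ← Complex.normSq_eq_conj_mul_self, Complex.normSq_apply,
    Complex.sq_norm, Complex.normSq_apply, Complex.ofReal_re]

lemma sqn_nonneg (M : Matrix n n ℂ) : 0 ≤ sqn M := by
  rw [sqn_eq_sum]
  positivity

lemma sqn_unitary_left {U : Matrix n n ℂ} (hU : star U * U = 1) (M : Matrix n n ℂ) :
    sqn (U * M) = sqn M := by
  unfold sqn
  have hU' : Uᴴ * U = 1 := hU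
  rw [conjTranspose_mul, mul_assoc, ← mul_assoc Uᴴ, hU', one_mul]

lemma sqn_unitary_right {U : Matrix n n ℂ} (hU : U * star U = 1) (M : Matrix n n ℂ) :
    sqn (M * U) = sqn M := by
  unfold sqn
  rw [conjTranspose_mul]
  rw [Matrix.trace_mul_cycle]
  have hU' : U * Uᴴ = 1 := hU
  rw [mul_assoc, mul_assoc, ← mul_assoc U, hU', one_mul, Matrix.trace_mul_comm]


open Matrix Finset

variable {n : Type*} [Fintype n] [DecidableEq n]


lemma unitary_row_sum {W : Matrix n n ℂ} (hW : W * star W = 1) (i : n) :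
    ∑ j, ‖W i j‖ ^ 2 = 1 := by
  have h := congrFun (congrFun hW i) i
  simp only [Matrix.mul_apply, Matrix.one_apply_eq] at h
  have : ∀ j, W i j * star W j i = (‖W i j‖ ^ 2 : ℝ) := by
    intro j
    rw [Matrix.star_apply, Complex.star_def, Complex.mul_conj]
    rw [Complex.sq_norm]
  have h2 : ((∑ j, ‖W i j‖ ^ 2 : ℝ) : ℂ) = 1 := by
    rw [Complex.ofReal_sum, ← h]
    exact (Finset.sum_congr rfl fun j _ => (this j).symm)
  exact_mod_cast h2

lemma unitary_col_sum {W : Matrix n n ℂ} (hW : star W * W = 1) (j : n) :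
    ∑ i, ‖W i j‖ ^ 2 = 1 := by
  have h := congrFun (congrFun hW j) j
  simp only [Matrix.mul_apply, Matrix.one_apply_eq] at h
  have : ∀ i, star W j i * W i j = (‖W i j‖ ^ 2 : ℝ) := by
    intro i
    rw [Matrix.star_apply, Complex.star_def, mul_comm, Complex.mul_conj]
    rw [Complex.sq_norm]
  have h2 : ((∑ i, ‖W i j‖ ^ 2 : ℝ) : ℂ) = 1 := by
    rw [Complex.ofReal_sum, ← h]
    exact (Finset.sum_congr rfl fun i _ => (this i).symm)
  exact_mod_cast h2

/-- core Hoffman–Wielandt inequality after diagonalization -/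
lemma hw_core {W : Matrix n n ℂ} (hW : W ∈ Matrix.unitaryGroup n ℂ) (a b : n → ℂ) :
    ∃ σ : Equiv.Perm n, ∑ i, ‖a i - b (σ i)‖ ^ 2 ≤
      sqn (diagonal a * W - W * diagonal b) := by
  classical
  set S : Matrix n n ℝ := fun i j => ‖W i j‖ ^ 2 with hS
  have hSd : S ∈ doublyStochastic ℝ n := by
    rw [mem_doublyStochastic_iff_sum]
    exact ⟨fun i j => by positivity, fun i => unitary_row_sum hW.2 i,
      fun j => unitary_col_sum hW.1 j⟩
  have hentry : ∀ i j, (diagonal a * W - W * diagonal b) i j = (a i - b j) * W i j := by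
    intro i j
    simp only [Matrix.sub_apply, Matrix.diagonal_mul, Matrix.mul_diagonal]
    ring
  have hsqn : sqn (diagonal a * W - W * diagonal b) = ∑ i, ∑ j, S i j * ‖a i - b j‖ ^ 2 := by
    rw [sqn_eq_sum]
    refine Finset.sum_congr rfl fun i _ => Finset.sum_congr rfl fun j _ => ?_
    rw [hentry, norm_mul, mul_pow, hS]
    ring
  obtain ⟨w, hw0, hw1, hwS⟩ := exists_eq_sum_perm_of_mem_doublyStochastic hSd
  -- value of each permutation
  set v : Equiv.Perm n → ℝ := fun σ => ∑ i, ‖a i - b (σ i)‖ ^ 2 with hv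
  have hperm : ∀ (σ : Equiv.Perm n) (i j : n),
      (σ.permMatrix ℝ) i j = if σ i = j then 1 else 0 := by
    intro σ i j
    simp [Equiv.Perm.permMatrix, PEquiv.toMatrix_apply, Equiv.toPEquiv_apply, Option.mem_def]
  have hSapply : ∀ i j, S i j = ∑ σ : Equiv.Perm n, w σ * (σ.permMatrix ℝ) i j := by
    intro i j
    rw [← hwS]
    simp [Matrix.sum_apply]
  have hsum : ∑ i, ∑ j, S i j * ‖a i - b j‖ ^ 2 = ∑ σ : Equiv.Perm n, w σ * v σ := by
    have step1 : ∑ i, ∑ j, S i j * ‖a i - b j‖ ^ 2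
        = ∑ i, ∑ j, ∑ σ : Equiv.Perm n, w σ * (σ.permMatrix ℝ) i j * ‖a i - b j‖ ^ 2 := by
      refine Finset.sum_congr rfl fun i _ => Finset.sum_congr rfl fun j _ => ?_
      rw [hSapply, Finset.sum_mul]
    rw [step1]
    have step2 : ∑ i, ∑ j, ∑ σ : Equiv.Perm n, w σ * (σ.permMatrix ℝ) i j * ‖a i - b j‖ ^ 2
        = ∑ σ : Equiv.Perm n, ∑ i, ∑ j, w σ * (σ.permMatrix ℝ) i j * ‖a i - b j‖ ^ 2 := by
      rw [Finset.sum_comm (γ := Equiv.Perm n)]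
      exact Finset.sum_congr rfl fun σ _ => Finset.sum_comm
    rw [step2]
    refine Finset.sum_congr rfl fun σ _ => ?_
    rw [hv, Finset.mul_sum]
    refine Finset.sum_congr rfl fun i _ => ?_
    rw [Finset.sum_eq_single (σ i)]
    · rw [hperm]; simp
    · intro j _ hj
      rw [hperm]; simp [Ne.symm hj]
    · simp
  -- exists σ with v σ ≤ weighted average
  have : ∃ σ : Equiv.Perm n, v σ ≤ ∑ σ : Equiv.Perm n, w σ * v σ := by
    by_contra hcon
    push_neg at hcon
    set T : ℝ := ∑ σ : Equiv.Perm n, w σ * v σ with hT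
    have hlt : ∀ σ, w σ * T ≤ w σ * v σ ∧ (w σ ≠ 0 → w σ * T < w σ * v σ) := by
      intro σ
      rcases eq_or_lt_of_le (hw0 σ) with h0 | h0
      · simp [← h0]
      · exact ⟨le_of_lt (by exact (mul_lt_mul_iff_right₀ h0).mpr (hcon σ)),
          fun _ => (mul_lt_mul_iff_right₀ h0).mpr (hcon σ)⟩
    have hne : ∃ σ : Equiv.Perm n, w σ ≠ 0 := by
      by_contra hall
      push_neg at hall
      rw [Finset.sum_eq_zero (fun σ _ => hall σ)] at hw1
      norm_num at hw1
    obtain ⟨σ₀, hσ₀⟩ := hne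
    have : ∑ σ : Equiv.Perm n, w σ * T < ∑ σ : Equiv.Perm n, w σ * v σ :=
      Finset.sum_lt_sum (fun σ _ => (hlt σ).1) ⟨σ₀, Finset.mem_univ _, (hlt σ₀).2 hσ₀⟩
    rw [← Finset.sum_mul, hw1, one_mul] at this
    exact lt_irrefl _ this
  obtain ⟨σ, hσ⟩ := this
  exact ⟨σ, by rw [hsqn, hsum]; exact hσ⟩


open Matrix

variable {n : Type*} [Fintype n] [DecidableEq n]

lemma blockdiag_spectral {K : Matrix n n ℂ} (hK : K.IsHermitian)
    (σ : n → ℝ) (hblock : ∀ i j, σ i ≠ σ j → K i j = 0) :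
    ∃ V ∈ Matrix.unitaryGroup n ℂ, (∀ i j, σ i ≠ σ j → V i j = 0) ∧
      ∃ g : n → ℂ, star V * K * V = diagonal g := by
  classical
  let κ := Set.range σ
  let σ' : n → κ := fun i => ⟨σ i, Set.mem_range_self i⟩
  let e : (Σ v : κ, {i // σ' i = v}) ≃ n := Equiv.sigmaFiberEquiv σ'
  let Kb : ∀ v : κ, Matrix {i // σ' i = v} {i // σ' i = v} ℂ :=
    fun v => Matrix.of fun i j => K i.1 j.1
  have hKb : ∀ v, (Kb v).IsHermitian := by
    intro v
    ext i j
    simp only [conjTranspose_apply, Kb, Matrix.of_apply]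
    exact congrFun (congrFun hK i.1) j.1
  let W : ∀ v : κ, Matrix {i // σ' i = v} {i // σ' i = v} ℂ :=
    fun v => ((hKb v).eigenvectorUnitary : Matrix _ _ ℂ)
  have hW1 : ∀ v, star (W v) * W v = 1 := fun v => ((hKb v).eigenvectorUnitary.2).1
  have hW2 : ∀ v, W v * star (W v) = 1 := fun v => ((hKb v).eigenvectorUnitary.2).2
  have hWK : ∀ v, star (W v) * Kb v * W v
      = diagonal (Complex.ofReal ∘ (hKb v).eigenvalues) := fun v =>
    by have := (hKb v).conjStarAlgAut_star_eigenvectorUnitary; rwa [Unitary.conjStarAlgAut_star_apply] at this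
  -- the assembled unitary
  let V : Matrix n n ℂ := (blockDiagonal' W).submatrix e.symm e.symm
  have hVstar : star V = (blockDiagonal' fun v => star (W v)).submatrix e.symm e.symm := by
    show Vᴴ = _
    rw [conjTranspose_submatrix, blockDiagonal'_conjTranspose]
    rfl
  have hsub_mul : ∀ (M N : Matrix (Σ v : κ, {i // σ' i = v}) (Σ v : κ, {i // σ' i = v}) ℂ),
      M.submatrix e.symm e.symm * N.submatrix e.symm e.symm = (M * N).submatrix e.symm e.symm :=
    fun M N => submatrix_mul_equiv M N e.symm e.symm e.symm
  have hprodL : (blockDiagonal' fun v => star (W v)) * blockDiagonal' W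
      = blockDiagonal' (fun v => star (W v) * W v) := (blockDiagonal'_mul _ _).symm
  have hprodR : blockDiagonal' W * (blockDiagonal' fun v => star (W v))
      = blockDiagonal' (fun v => W v * star (W v)) := (blockDiagonal'_mul _ _).symm
  have honeL : blockDiagonal' (fun v => star (W v) * W v)
      = (1 : Matrix (Σ v : κ, {i // σ' i = v}) (Σ v : κ, {i // σ' i = v}) ℂ) := by
    rw [show (fun v => star (W v) * W v) = fun v : κ =>
        (1 : Matrix {i // σ' i = v} {i // σ' i = v} ℂ) from funext fun v => hW1 v]
    exact blockDiagonal'_one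
  have honeR : blockDiagonal' (fun v => W v * star (W v))
      = (1 : Matrix (Σ v : κ, {i // σ' i = v}) (Σ v : κ, {i // σ' i = v}) ℂ) := by
    rw [show (fun v => W v * star (W v)) = fun v : κ =>
        (1 : Matrix {i // σ' i = v} {i // σ' i = v} ℂ) from funext fun v => hW2 v]
    exact blockDiagonal'_one
  have hVunit : V ∈ Matrix.unitaryGroup n ℂ := by
    constructor
    · rw [hVstar, hsub_mul, hprodL, honeL, submatrix_one_equiv]
    · rw [hVstar, hsub_mul, hprodR, honeR, submatrix_one_equiv]
  have hVblock : ∀ i j, σ i ≠ σ j → V i j = 0 := by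
    intro i j hij
    show blockDiagonal' W (e.symm i) (e.symm j) = 0
    have hne : (e.symm i).1 ≠ (e.symm j).1 := by
      show σ' i ≠ σ' j
      exact fun h => hij (congrArg Subtype.val h)
    exact blockDiagonal'_apply_ne W _ _ hne
  have hKeq : K = (blockDiagonal' Kb).submatrix e.symm e.symm := by
    have h1 : blockDiagonal' Kb = K.submatrix e e := by
      ext p q
      rcases p with ⟨v, i⟩
      rcases q with ⟨w, j⟩
      by_cases h : v = w
      · subst h
        rw [blockDiagonal'_apply_eq]
        rfl
      · rw [blockDiagonal'_apply_ne _ _ _ h]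
        have : σ i.1 ≠ σ j.1 := by
          intro hc
          apply h
          rw [← i.2, ← j.2]
          exact Subtype.ext hc
        exact (hblock _ _ this).symm
    rw [h1, submatrix_submatrix]
    have : (e ∘ e.symm) = id := funext fun x => e.apply_symm_apply x
    rw [this, submatrix_id_id]
  refine ⟨V, hVunit, hVblock, ?_⟩
  have hp1 : (blockDiagonal' fun v => star (W v)) * blockDiagonal' Kb
      = blockDiagonal' (fun v => star (W v) * Kb v) := (blockDiagonal'_mul _ _).symm
  have hp2 : blockDiagonal' (fun v => star (W v) * Kb v) * blockDiagonal' W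
      = blockDiagonal' (fun v => star (W v) * Kb v * W v) := (blockDiagonal'_mul _ _).symm
  have hfinal : star V * K * V
      = (blockDiagonal' fun v => star (W v) * Kb v * W v).submatrix e.symm e.symm := by
    rw [hKeq, hVstar]
    show (blockDiagonal' fun v => star (W v)).submatrix e.symm e.symm *
        (blockDiagonal' Kb).submatrix e.symm e.symm *
        (blockDiagonal' W).submatrix e.symm e.symm = _
    rw [hsub_mul, hsub_mul, hp1, hp2]
  have hdiag : (fun v : κ => star (W v) * Kb v * W v)
      = fun v => diagonal (Complex.ofReal ∘ (hKb v).eigenvalues) := funext fun v => hWK v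
  rw [hfinal, hdiag, blockDiagonal'_diagonal, submatrix_diagonal _ _ e.symm.injective]
  exact ⟨_, rfl⟩


open Matrix

variable {n : Type*} [Fintype n] [DecidableEq n]


lemma normal_spectral {A : Matrix n n ℂ} (hA : Aᴴ * A = A * Aᴴ) :
    ∃ U ∈ Matrix.unitaryGroup n ℂ, ∃ f : n → ℂ, star U * A * U = diagonal f := by
  classical
  set H : Matrix n n ℂ := (1/2 : ℂ) • (A + Aᴴ) with hHdef
  have hH : H.IsHermitian := by
    unfold Matrix.IsHermitian
    rw [hHdef, conjTranspose_smul, conjTranspose_add, conjTranspose_conjTranspose]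
    rw [show star (1/2 : ℂ) = (1/2 : ℂ) by simp]
    rw [add_comm]
  set U₁ : Matrix n n ℂ := (hH.eigenvectorUnitary : Matrix n n ℂ) with hU₁def
  have hU₁ : U₁ ∈ Matrix.unitaryGroup n ℂ := hH.eigenvectorUnitary.2
  have hU₁s : star U₁ * U₁ = 1 := hU₁.1
  have hU₁m : U₁ * star U₁ = 1 := hU₁.2
  set σ : n → ℝ := hH.eigenvalues with hσdef
  set D : Matrix n n ℂ := diagonal (Complex.ofReal ∘ σ) with hDdef
  have hD : star U₁ * H * U₁ = D := by have := hH.conjStarAlgAut_star_eigenvectorUnitary; rwa [Unitary.conjStarAlgAut_star_apply] at this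
  set B : Matrix n n ℂ := star U₁ * A * U₁ with hBdef
  have hAH : A * H = H * A := by
    rw [hHdef]
    rw [Matrix.mul_smul, Matrix.smul_mul, Matrix.mul_add, Matrix.add_mul, hA]
  have hBD : B * D = D * B := by
    rw [← hD, hBdef]
    calc star U₁ * A * U₁ * (star U₁ * H * U₁)
        = star U₁ * (A * (U₁ * star U₁) * H) * U₁ := by
          simp only [Matrix.mul_assoc]
      _ = star U₁ * (A * H) * U₁ := by rw [hU₁m]; simp only [Matrix.mul_one]
      _ = star U₁ * (H * A) * U₁ := by rw [hAH]
      _ = star U₁ * (H * (U₁ * star U₁) * A) * U₁ := by rw [hU₁m]; simp only [Matrix.mul_one]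
      _ = star U₁ * H * U₁ * (star U₁ * A * U₁) := by simp only [Matrix.mul_assoc]
  have hAH2 : Aᴴ = (2:ℂ) • H - A := by
    rw [hHdef, smul_smul]
    norm_num
  have hBH : Bᴴ = (2:ℂ) • D - B := by
    have h1 : Bᴴ = star U₁ * Aᴴ * U₁ := by
      rw [hBdef, conjTranspose_mul, conjTranspose_mul]
      rw [show (star U₁)ᴴ = U₁ from star_star U₁]
      exact (Matrix.mul_assoc _ _ _).symm
    rw [h1, hAH2, Matrix.mul_sub, Matrix.sub_mul, Matrix.mul_smul, Matrix.smul_mul, hD, hBdef]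
  -- the skew part
  set K : Matrix n n ℂ := B - D with hKdef
  have hDH : Dᴴ = D := by
    rw [hDdef, diagonal_conjTranspose]
    have : star (Complex.ofReal ∘ σ) = Complex.ofReal ∘ σ := by
      funext i
      rw [Pi.star_apply, Function.comp_apply, RCLike.star_def, Complex.conj_ofReal]
    rw [this]
  have hKskew : Kᴴ = -K := by
    rw [hKdef, conjTranspose_sub, hBH, hDH]
    ext i j
    simp only [Matrix.sub_apply, Matrix.neg_apply, Matrix.smul_apply, smul_eq_mul]
    ring
  set K' : Matrix n n ℂ := Complex.I • K with hK'def
  have hK' : K'.IsHermitian := by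
    unfold Matrix.IsHermitian
    rw [hK'def, conjTranspose_smul, hKskew]
    rw [show star Complex.I = -Complex.I from Complex.conj_I]
    ext i j
    simp only [Matrix.smul_apply, Matrix.neg_apply, smul_eq_mul]
    ring
  have hKD : K * D = D * K := by
    rw [hKdef, Matrix.sub_mul, Matrix.mul_sub, hBD]
  have hK'D : K' * D = D * K' := by
    rw [hK'def, Matrix.smul_mul, Matrix.mul_smul, hKD]
  have hblock : ∀ i j, σ i ≠ σ j → K' i j = 0 := by
    intro i j hij
    have h := congrFun (congrFun hK'D i) j
    rw [hDdef] at h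
    rw [Matrix.mul_diagonal, Matrix.diagonal_mul] at h
    have hσc : (σ j : ℂ) ≠ (σ i : ℂ) := by
      intro hc
      exact hij (Complex.ofReal_injective hc).symm
    have : K' i j * ((σ j : ℂ) - (σ i : ℂ)) = 0 := by
      simp only [Function.comp_apply] at h
      rw [mul_sub, h]
      ring
    rcases mul_eq_zero.mp this with h0 | h0
    · exact h0
    · exact absurd (sub_eq_zero.mp h0) hσc
  obtain ⟨V, hVunit, hVblock, g, hVKV⟩ := blockdiag_spectral hK' σ hblock
  have hVs : star V * V = 1 := hVunit.1
  have hVm : V * star V = 1 := hVunit.2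
  have hVD : V * D = D * V := by
    ext i j
    rw [hDdef, Matrix.mul_diagonal, Matrix.diagonal_mul]
    by_cases h : σ i = σ j
    · simp only [Function.comp_apply, h]
      ring
    · rw [hVblock i j h]
      ring
  refine ⟨U₁ * V, mul_mem hU₁ hVunit, fun i => (σ i : ℂ) + (-Complex.I) * g i, ?_⟩
  have hstep : star (U₁ * V) * A * (U₁ * V) = star V * B * V := by
    rw [hBdef]
    rw [show star (U₁ * V) = star V * star U₁ from StarMul.star_mul U₁ V]
    simp only [Matrix.mul_assoc]
  rw [hstep]
  have hBsplit : B = D + K := by rw [hKdef]; abel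
  rw [show star V * B * V = star V * (D + K) * V from by rw [← hBsplit]]
  rw [Matrix.mul_add, Matrix.add_mul]
  have h1 : star V * D * V = D := by
    calc star V * D * V = star V * (D * V) := Matrix.mul_assoc _ _ _
      _ = star V * (V * D) := by rw [hVD]
      _ = star V * V * D := (Matrix.mul_assoc _ _ _).symm
      _ = D := by rw [hVs, Matrix.one_mul]
  have hKK' : K = (-Complex.I) • K' := by
    rw [hK'def, smul_smul]
    have : (-Complex.I) * Complex.I = 1 := by
      rw [neg_mul, Complex.I_mul_I, neg_neg]
    rw [this, one_smul]
  have h2 : star V * K * V = (-Complex.I) • diagonal g := by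
    rw [hKK', Matrix.mul_smul, Matrix.smul_mul, hVKV]
  rw [h1, h2, hDdef]
  ext i j
  by_cases h : i = j
  · subst h
    simp [Matrix.diagonal_apply_eq]
  · simp [Matrix.diagonal_apply_ne _ h]


attribute [local instance] Matrix.frobeniusNormedAddCommGroup

/-- Hoffman–Wielandt theorem: for normal matrices `A`, `B` and any enumerations
`μA`, `μB` of their eigenvalues (with multiplicity, i.e. of the roots of the
characteristic polynomials), there is a permutation `σ` with
`(∑ i, |μA i − μB (σ i)|²)^{1/2} ≤ ‖A − B‖₂` (Frobenius norm). -/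
theorem hoffman_wielandt {d : ℕ} {A B : Matrix (Fin d) (Fin d) ℂ}
    (hA : Aᴴ * A = A * Aᴴ) (hB : Bᴴ * B = B * Bᴴ)
    (μA μB : Fin d → ℂ)
    (hμA : Multiset.map μA Finset.univ.val = A.charpoly.roots)
    (hμB : Multiset.map μB Finset.univ.val = B.charpoly.roots) :
    ∃ σ : Equiv.Perm (Fin d),
      Real.sqrt (∑ i, ‖μA i - μB (σ i)‖ ^ 2) ≤ ‖A - B‖ := by
  classical
  obtain ⟨U, hU, fa, hUA⟩ := normal_spectral hA
  obtain ⟨V, hV, fb, hVB⟩ := normal_spectral hB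
  have hUs : star U * U = 1 := hU.1
  have hUm : U * star U = 1 := hU.2
  have hVs : star V * V = 1 := hV.1
  have hVm : V * star V = 1 := hV.2
  -- A = U * diagonal fa * star U
  have hAeq : A = U * diagonal fa * star U := by
    rw [← hUA]
    calc A = 1 * A * 1 := by rw [Matrix.one_mul, Matrix.mul_one]
      _ = (U * star U) * A * (U * star U) := by rw [hUm]
      _ = U * (star U * A * U) * star U := by simp only [Matrix.mul_assoc]
  have hBeq : B = V * diagonal fb * star V := by
    rw [← hVB]
    calc B = 1 * B * 1 := by rw [Matrix.one_mul, Matrix.mul_one]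
      _ = (V * star V) * B * (V * star V) := by rw [hVm]
      _ = V * (star V * B * V) * star V := by simp only [Matrix.mul_assoc]
  -- eigenvalue enumerations are permutations of fa, fb
  have hrootsA : A.charpoly.roots = Finset.univ.val.map fa := by
    rw [hAeq, charpoly_unitary_conj hU, roots_charpoly_diagonal]
  have hrootsB : B.charpoly.roots = Finset.univ.val.map fb := by
    rw [hBeq, charpoly_unitary_conj hV, roots_charpoly_diagonal]
  obtain ⟨τa, hτa⟩ := exists_perm_of_map_univ_eq μA fa (by rw [hμA, hrootsA])
  obtain ⟨τb, hτb⟩ := exists_perm_of_map_univ_eq μB fb (by rw [hμB, hrootsB])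
  -- core inequality
  set W : Matrix (Fin d) (Fin d) ℂ := star U * V with hWdef
  have hW : W ∈ Matrix.unitaryGroup (Fin d) ℂ := mul_mem (Unitary.star_mem hU) hV
  obtain ⟨π, hπ⟩ := hw_core hW fa fb
  have hconj : diagonal fa * W - W * diagonal fb = star U * (A - B) * V := by
    rw [← hUA, ← hVB, hWdef]
    calc (star U * A * U) * (star U * V) - (star U * V) * (star V * B * V)
        = star U * A * (U * star U) * V - star U * (V * star V) * B * V := by
          simp only [Matrix.mul_assoc]
      _ = star U * A * V - star U * B * V := by
          rw [hUm, hVm]; simp only [Matrix.mul_one, Matrix.one_mul]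
      _ = star U * (A - B) * V := by
          rw [Matrix.mul_sub, Matrix.sub_mul]
  have hsqn_eq : sqn (diagonal fa * W - W * diagonal fb) = sqn (A - B) := by
    rw [hconj]
    have h1 : star (star U) * star U = 1 := by rw [star_star]; exact hUm
    rw [show star U * (A - B) * V = star U * ((A - B) * V) from Matrix.mul_assoc _ _ _]
    rw [sqn_unitary_left h1, sqn_unitary_right hVm]
  -- choose the permutation
  refine ⟨(τa.trans π).trans τb.symm, ?_⟩
  have hsum_eq : ∑ i, ‖μA i - μB (((τa.trans π).trans τb.symm) i)‖ ^ 2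
      = ∑ i, ‖fa i - fb (π i)‖ ^ 2 := by
    have h1 : ∀ i, μA i - μB (((τa.trans π).trans τb.symm) i)
        = fa (τa i) - fb (π (τa i)) := by
      intro i
      rw [hτa i, hτb _]
      simp [Equiv.trans_apply, Equiv.apply_symm_apply]
    calc ∑ i, ‖μA i - μB (((τa.trans π).trans τb.symm) i)‖ ^ 2
        = ∑ i, ‖fa (τa i) - fb (π (τa i))‖ ^ 2 := by
          exact Finset.sum_congr rfl fun i _ => by rw [h1]
      _ = ∑ i, ‖fa i - fb (π i)‖ ^ 2 :=
          Equiv.sum_comp τa (fun j => ‖fa j - fb (π j)‖ ^ 2)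
  rw [hsum_eq]
  have hle : ∑ i, ‖fa i - fb (π i)‖ ^ 2 ≤ sqn (A - B) := by
    rw [← hsqn_eq]; exact hπ
  have hnorm : ‖A - B‖ = Real.sqrt (sqn (A - B)) := by
    rw [frobenius_norm_def, sqn_eq_sum]
    have h2 : ∀ i j, ‖(A - B) i j‖ ^ (2:ℝ) = ‖(A - B) i j‖ ^ 2 := by
      intro i j
      rw [show (2:ℝ) = ((2:ℕ):ℝ) by norm_num, Real.rpow_natCast]
    rw [show (∑ i, ∑ j, ‖(A - B) i j‖ ^ (2:ℝ)) = ∑ i, ∑ j, ‖(A - B) i j‖ ^ 2 from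
      Finset.sum_congr rfl fun i _ => Finset.sum_congr rfl fun j _ => h2 i j]
    rw [← Real.sqrt_eq_rpow]
  rw [hnorm]
  exact Real.sqrt_le_sqrt hle
end
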